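/- (One-step bound for the IntDIANA shift sequence.) Fix vectors g_1, …, g_n, h_1, …, h_n, c_1, …, c_n ∈ ℝ^d and a scaling vector α ∈ ℝ^d with strictly positive entries. Let Q_i = (1/α) ∘ Int(α ∘ (g_i − h_i)) with randomized roundings independent across coordinates, and set h_i⁺ = h_i + Q_i. Then E[(1/n) Σ_{i=1}^n ‖h_i⁺ − c_i‖²] ≤ (1/n) Σ_{i=1}^n ‖g_i − c_i‖² + Σ_{j=1}^d 1/α_j². -/

import Mathlib

open MeasureTheory Finset

/-- The randomized integer rounding `Int : ℝ → ℤ`, driven by a uniform random variable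
`u ∈ [0,1]`: it returns `⌊t⌋ + 1` when `u < t - ⌊t⌋` (an event of probability `t - ⌊t⌋`)
and `⌊t⌋` otherwise. -/
noncomputable def rInt (t u : ℝ) : ℤ := if u < Int.fract t then ⌊t⌋ + 1 else ⌊t⌋

instance probIcc : IsProbabilityMeasure (volume.restrict (Set.Icc (0 : ℝ) 1)) :=
  ⟨by rw [Measure.restrict_apply_univ]; simp [Real.volume_Icc]⟩

lemma map_eval_pi {ι : Type*} [Fintype ι] [DecidableEq ι] {α : ι → Type*} [∀ i, MeasurableSpace (α i)]
    (μ : ∀ i, Measure (α i)) [∀ i, IsProbabilityMeasure (μ i)] (i : ι) :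
    (Measure.pi μ).map (Function.eval i) = μ i := by
  ext s hs
  rw [Measure.map_apply (measurable_pi_apply i) hs]
  have h1 : Function.eval i ⁻¹' s
      = Set.pi Set.univ (Function.update (fun j => (Set.univ : Set (α j))) i s) := by
    ext x
    simp only [Set.mem_preimage, Set.mem_univ_pi, Function.eval]
    constructor
    · intro hx j
      rcases eq_or_ne j i with rfl | hj
      · simpa using hx
      · simp [Function.update_of_ne hj]
    · intro hx
      have := hx i
      simpa using this
  rw [h1, Measure.pi_pi]
  rw [Fintype.prod_eq_single i (fun j hj => by simp [Function.update_of_ne hj])]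
  simp

/-- explicit form of the per-coordinate integrand -/
lemma F_eq (t a ai : ℝ) :
    (fun u => (a + ai * (rInt t u : ℝ)) ^ 2)
      = fun u => (a + ai * (⌊t⌋ : ℝ)) ^ 2 +
          (Set.Iio (Int.fract t)).indicator
            (fun _ => (a + ai * ((⌊t⌋ : ℝ) + 1)) ^ 2 - (a + ai * (⌊t⌋ : ℝ)) ^ 2) u := by
  funext u
  by_cases hu : u < Int.fract t
  · simp [rInt, hu, Set.indicator_of_mem, Set.mem_Iio]
  · simp [rInt, hu, Set.indicator_of_notMem, Set.mem_Iio]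

lemma F_meas (t a ai : ℝ) : Measurable (fun u => (a + ai * (rInt t u : ℝ)) ^ 2) := by
  rw [F_eq]
  exact measurable_const.add (measurable_const.indicator measurableSet_Iio)

lemma F_int (t a ai : ℝ) :
    Integrable (fun u => (a + ai * (rInt t u : ℝ)) ^ 2)
      (volume.restrict (Set.Icc (0 : ℝ) 1)) := by
  rw [F_eq]
  exact (integrable_const _).add ((integrable_const _).indicator measurableSet_Iio)

lemma coordKey (αj a b : ℝ) (hαj : 0 < αj) :
    ∫ u in Set.Icc (0 : ℝ) 1, (a + αj⁻¹ * (rInt (αj * (b - a)) u : ℝ)) ^ 2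
      ≤ b ^ 2 + (αj ^ 2)⁻¹ := by
  set t := αj * (b - a) with ht
  set f := Int.fract t with hf
  set m := (⌊t⌋ : ℝ) with hm
  have hf0 : 0 ≤ f := Int.fract_nonneg t
  have hf1 : f < 1 := Int.fract_lt_one t
  have hkey : ∫ u in Set.Icc (0 : ℝ) 1, (a + αj⁻¹ * (rInt t u : ℝ)) ^ 2
      = (a + αj⁻¹ * m) ^ 2 + ((a + αj⁻¹ * (m + 1)) ^ 2 - (a + αj⁻¹ * m) ^ 2) * f := by
    rw [F_eq t a αj⁻¹]
    rw [integral_add (integrable_const _)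
      ((integrable_const _).indicator measurableSet_Iio)]
    rw [integral_indicator measurableSet_Iio, setIntegral_const, integral_const]
    have hres : (volume.restrict (Set.Icc (0:ℝ) 1)) (Set.Iio f) = ENNReal.ofReal f := by
      rw [Measure.restrict_apply measurableSet_Iio]
      have : Set.Iio f ∩ Set.Icc (0:ℝ) 1 = Set.Ico 0 f := by
        ext x
        simp only [Set.mem_inter_iff, Set.mem_Iio, Set.mem_Icc, Set.mem_Ico]
        constructor
        · rintro ⟨h1, h2, h3⟩; exact ⟨h2, h1⟩
        · rintro ⟨h1, h2⟩; exact ⟨h2, h1, le_of_lt (lt_of_lt_of_le h2 hf1.le)⟩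
      rw [this, Real.volume_Ico, sub_zero]
    rw [measureReal_def, measureReal_def, Measure.restrict_apply_univ, hres]
    simp only [smul_eq_mul, ENNReal.toReal_ofReal hf0, Real.volume_Icc, sub_zero,
      ENNReal.toReal_ofReal zero_le_one, one_mul, ← hf, ← hm]
    ring
  rw [hkey]
  have hb : b = a + αj⁻¹ * (m + f) := by
    have h1 : αj⁻¹ * t = b - a := by
      rw [ht, ← mul_assoc, inv_mul_cancel₀ hαj.ne', one_mul]
    have ht2 : t = m + f := by rw [hm, hf]; exact (Int.floor_add_fract t).symm
    rw [← ht2]; linarith [h1]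
  have hai2 : (αj ^ 2)⁻¹ = αj⁻¹ ^ 2 := by rw [inv_pow]
  rw [hb, hai2]
  nlinarith [mul_nonneg (sq_nonneg αj⁻¹) (sub_nonneg.2 hf1.le),
    mul_nonneg (sq_nonneg αj⁻¹) (sq_nonneg f),
    mul_nonneg (mul_nonneg (sq_nonneg αj⁻¹) hf0) (sub_nonneg.2 hf1.le)]

/-- The randomness driving the roundings: independent uniforms on `[0,1]`, one for each
worker `i = 1, …, n` and each coordinate `j = 1, …, d`. -/
noncomputable def roundMeasure (n d : ℕ) : Measure (Fin n → Fin d → ℝ) :=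
  Measure.pi fun _ => Measure.pi fun _ => volume.restrict (Set.Icc (0 : ℝ) 1)

/-- (One-step bound for the IntDIANA shift sequence.)
With `Q_i = (1/α) ∘ Int(α ∘ (g_i − h_i))` and `h_i⁺ = h_i + Q_i`, one has
`E[(1/n) Σ_i ‖h_i⁺ − c_i‖²] ≤ (1/n) Σ_i ‖g_i − c_i‖² + Σ_j 1/α_j²`
(squared Euclidean norms written as sums of squares of coordinates). -/
theorem stmt17 (d n : ℕ) (hn : 0 < n)
    (g h c : Fin n → Fin d → ℝ) (α : Fin d → ℝ) (hα : ∀ j, 0 < α j)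
    (hplus : (Fin n → Fin d → ℝ) → Fin n → Fin d → ℝ)
    (hhplus : ∀ ω i j, hplus ω i j =
      h i j + (α j)⁻¹ * (rInt (α j * (g i j - h i j)) (ω i j) : ℝ)) :
    (∫ ω, (n : ℝ)⁻¹ * ∑ i, ∑ j, (hplus ω i j - c i j) ^ 2 ∂(roundMeasure n d)) ≤
      (n : ℝ)⁻¹ * ∑ i, ∑ j, (g i j - c i j) ^ 2 + ∑ j, ((α j) ^ 2)⁻¹ := by
  classical
  set μ := roundMeasure n d with hμ
  set φ : Fin n → Fin d → ℝ → ℝ := fun i j u =>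
    ((h i j - c i j) + (α j)⁻¹ *
      (rInt (α j * ((g i j - c i j) - (h i j - c i j))) u : ℝ)) ^ 2 with hφdef
  have hmeasE : ∀ (i : Fin n) (j : Fin d),
      Measurable fun ω : Fin n → Fin d → ℝ => ω i j := fun i j =>
    (measurable_pi_apply j).comp (measurable_pi_apply i)
  have hmap : ∀ (i : Fin n) (j : Fin d),
      μ.map (fun ω => ω i j) = volume.restrict (Set.Icc (0 : ℝ) 1) := by
    intro i j
    have h1 : μ.map (Function.eval i)
        = Measure.pi (fun _ : Fin d => volume.restrict (Set.Icc (0 : ℝ) 1)) :=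
      map_eval_pi _ i
    have h2 : (Measure.pi (fun _ : Fin d => volume.restrict (Set.Icc (0 : ℝ) 1))).map
        (Function.eval j) = volume.restrict (Set.Icc (0 : ℝ) 1) := map_eval_pi _ j
    calc μ.map (fun ω => ω i j)
        = (μ.map (Function.eval i)).map (Function.eval j) := by
          rw [Measure.map_map (measurable_pi_apply j) (measurable_pi_apply i)]; rfl
      _ = volume.restrict (Set.Icc (0 : ℝ) 1) := by rw [h1, h2]
  have hφmeas : ∀ i j, Measurable (φ i j) := fun i j => F_meas _ _ _
  have hint : ∀ (i : Fin n) (j : Fin d),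
      Integrable (fun ω => φ i j (ω i j)) μ := by
    intro i j
    have key : Integrable (φ i j) (μ.map (fun ω => ω i j)) := by
      rw [hmap i j]; exact F_int _ _ _
    exact (integrable_map_measure (hφmeas i j).aestronglyMeasurable
      (hmeasE i j).aemeasurable).mp key
  have hpt : (fun ω => (n : ℝ)⁻¹ * ∑ i, ∑ j, (hplus ω i j - c i j) ^ 2)
      = fun ω => (n : ℝ)⁻¹ * ∑ i, ∑ j, φ i j (ω i j) := by
    funext ω
    congr 1
    refine Finset.sum_congr rfl fun i _ => Finset.sum_congr rfl fun j _ => ?_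
    rw [hhplus, hφdef]
    rw [show α j * (g i j - h i j)
        = α j * ((g i j - c i j) - (h i j - c i j)) from by ring]
    ring
  rw [hpt]
  calc (∫ ω, (n : ℝ)⁻¹ * ∑ i, ∑ j, φ i j (ω i j) ∂μ)
      = (n : ℝ)⁻¹ * ∑ i, ∑ j, ∫ ω, φ i j (ω i j) ∂μ := by
        rw [integral_const_mul, integral_finset_sum _
          (fun i _ => integrable_finset_sum _ (fun j _ => hint i j))]
        exact congrArg _ (Finset.sum_congr rfl fun i _ =>
          integral_finset_sum _ fun j _ => hint i j)
    _ = (n : ℝ)⁻¹ * ∑ i, ∑ j, ∫ u in Set.Icc (0 : ℝ) 1, φ i j u := by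
        refine congrArg _ (Finset.sum_congr rfl fun i _ =>
          Finset.sum_congr rfl fun j _ => ?_)
        rw [← hmap i j, integral_map (hmeasE i j).aemeasurable
          (hφmeas i j).aestronglyMeasurable]
    _ ≤ (n : ℝ)⁻¹ * ∑ i, ∑ j, ((g i j - c i j) ^ 2 + ((α j) ^ 2)⁻¹) := by
        gcongr with i _ j _
        exact coordKey (α j) (h i j - c i j) (g i j - c i j) (hα j)
    _ = (n : ℝ)⁻¹ * ∑ i, ∑ j, (g i j - c i j) ^ 2 + ∑ j, ((α j) ^ 2)⁻¹ := by
        have hsum : ∑ i : Fin n, ∑ j, ((g i j - c i j) ^ 2 + ((α j) ^ 2)⁻¹)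
            = (∑ i, ∑ j, (g i j - c i j) ^ 2) + (n : ℝ) * ∑ j, ((α j) ^ 2)⁻¹ := by
          simp [Finset.sum_add_distrib, Finset.card_univ]
        rw [hsum, mul_add, ← mul_assoc,
          inv_mul_cancel₀ (Nat.cast_ne_zero.2 hn.ne' : (n : ℝ) ≠ 0), one_mul]
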